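/- (Variance of the bootstrap deviation under sampling without replacement.) The random variable D = φᵀ Λ⁻¹ ( (1/ζ) Σ_{i∈S} φ_i ε_i − Σ_{i=1}^n φ_i ε_i ) has mean zero and variance E[D²] = ((1 − ζ)/ζ) · σ² · φᵀ Λ⁻¹ (Σ_{i=1}^n φ_i φ_iᵀ) Λ⁻¹ φ. -/

import Mathlib

open Matrix MeasureTheory ProbabilityTheory
open scoped ENNReal

instance instMeasurableSpaceFinsetFin (n : ℕ) : MeasurableSpace (Finset (Fin n)) := ⊤

section Aux

variable {d n : ℕ}

private lemma aux_dot_sum (w : Fin d → ℝ) (c : Fin n → ℝ) (u : Fin n → Fin d → ℝ) :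
    w ⬝ᵥ (∑ i, c i • u i) = ∑ i, c i * (w ⬝ᵥ u i) := by
  simp only [dotProduct, Finset.sum_apply, Pi.smul_apply, smul_eq_mul, Finset.mul_sum]
  rw [Finset.sum_comm]
  exact Finset.sum_congr rfl fun i _ => Finset.sum_congr rfl fun j _ => by ring

private lemma aux_dot_mulvec_sum (A : Matrix (Fin d) (Fin d) ℝ) (w : Fin d → ℝ)
    (c : Fin n → ℝ) (u : Fin n → Fin d → ℝ) :
    w ⬝ᵥ (A *ᵥ ∑ i, c i • u i) = ∑ i, c i * (w ⬝ᵥ (A *ᵥ u i)) := by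
  rw [show (A *ᵥ ∑ i, c i • u i) = ∑ i, c i • (A *ᵥ u i) by
    rw [← A.mulVecLin_apply, map_sum]; simp [Matrix.mulVecLin_apply]]
  exact aux_dot_sum w c fun i => A *ᵥ u i

/-- number of `m`-subsets of `Fin n` containing `i` -/
private lemma aux_card_mem (m : ℕ) (hm : 1 ≤ m) (i : Fin n) :
    (Finset.univ.filter fun s : Finset (Fin n) => s.card = m ∧ i ∈ s).card
      = (n - 1).choose (m - 1) := by
  classical
  have h1 : (Finset.univ.filter fun s : Finset (Fin n) => s.card = m ∧ i ∈ s).card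
      = (Finset.powersetCard (m - 1) ((Finset.univ : Finset (Fin n)).erase i)).card := by
    refine Finset.card_bij' (fun s _ => s.erase i) (fun t _ => insert i t) ?_ ?_ ?_ ?_
    · intro s hs
      simp only [Finset.mem_filter, Finset.mem_univ, true_and] at hs
      simp only [Finset.mem_powersetCard]
      refine ⟨fun x hx => ?_, ?_⟩
      · simp only [Finset.mem_erase, Finset.mem_univ, and_true]
        exact (Finset.mem_erase.mp hx).1
      · rw [Finset.card_erase_of_mem hs.2, hs.1]
    · intro t ht
      simp only [Finset.mem_powersetCard] at ht
      have hit : i ∉ t := fun h => by simpa using (ht.1 h)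
      simp only [Finset.mem_filter, Finset.mem_univ, true_and]
      refine ⟨?_, Finset.mem_insert_self _ _⟩
      rw [Finset.card_insert_of_notMem hit, ht.2]
      omega
    · intro s hs
      simp only [Finset.mem_filter, Finset.mem_univ, true_and] at hs
      exact Finset.insert_erase hs.2
    · intro t ht
      simp only [Finset.mem_powersetCard] at ht
      have hit : i ∉ t := fun h => by simpa using (ht.1 h)
      exact Finset.erase_insert hit
  rw [h1, Finset.card_powersetCard, Finset.card_erase_of_mem (Finset.mem_univ i),
    Finset.card_univ, Fintype.card_fin]

private lemma aux_card_all (m : ℕ) :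
    (Finset.univ.filter fun s : Finset (Fin n) => s.card = m).card = n.choose m := by
  classical
  rw [← Finset.powerset_univ, ← Finset.powersetCard_eq_filter, Finset.card_powersetCard,
    Finset.card_univ, Fintype.card_fin]

end Aux

theorem bootstrap_deviation_mean_variance
    {d n : ℕ} (hn : 1 ≤ n)
    (φi : Fin n → Fin d → ℝ) (φ : Fin d → ℝ) (lam : ℝ) (hlam : 0 < lam)
    (Λ : Matrix (Fin d) (Fin d) ℝ)
    (hΛ : Λ = lam • (1 : Matrix (Fin d) (Fin d) ℝ) + ∑ i, vecMulVec (φi i) (φi i))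
    {Ω : Type*} [MeasurableSpace Ω] (μ : Measure Ω) [IsProbabilityMeasure μ]
    (ε : Fin n → Ω → ℝ) (hε_meas : ∀ i, Measurable (ε i))
    (hε_indep : iIndepFun ε μ)
    (hε_L2 : ∀ i, MemLp (ε i) 2 μ)
    (σ : ℝ)
    (hε_mean : ∀ i, ∫ ω, ε i ω ∂μ = 0)
    (hε_var : ∀ i, ∫ ω, (ε i ω) ^ 2 ∂μ = σ ^ 2)
    (m : ℕ) (hm : 1 ≤ m) (hmn : m ≤ n)
    (ζ : ℝ) (hζ : ζ = (m : ℝ) / n)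
    (S : Ω → Finset (Fin n)) (hS_meas : Measurable S)
    (hS_law : ∀ s : Finset (Fin n),
      μ (S ⁻¹' {s}) = if s.card = m then ((n.choose m : ℝ≥0∞))⁻¹ else 0)
    (hS_indep : IndepFun S (fun ω i => ε i ω) μ)
    (D : Ω → ℝ)
    (hD : ∀ ω, D ω = φ ⬝ᵥ (Λ⁻¹ *ᵥ
      ((1 / ζ) • (∑ i ∈ S ω, ε i ω • φi i) - ∑ i, ε i ω • φi i))) :
    (∫ ω, D ω ∂μ = 0) ∧
    (∫ ω, (D ω) ^ 2 ∂μ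
        = ((1 - ζ) / ζ) * σ ^ 2 *
          (φ ⬝ᵥ (Λ⁻¹ *ᵥ ((∑ i, vecMulVec (φi i) (φi i)) *ᵥ (Λ⁻¹ *ᵥ φ))))) := by
  classical
  have hn0 : (0:ℝ) < n := by exact_mod_cast hn
  have hζ0 : ζ ≠ 0 := by
    rw [hζ]; positivity
  set a : Fin n → ℝ := fun i => φ ⬝ᵥ (Λ⁻¹ *ᵥ φi i) with ha
  set c : Finset (Fin n) → Fin n → ℝ :=
    fun s i => (1 / ζ) * (if i ∈ s then 1 else 0) - 1 with hc
  -- pointwise formula for D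
  have hD' : ∀ ω, D ω = ∑ i, c (S ω) i * ε i ω * a i := by
    intro ω
    rw [hD ω]
    have hv : (1 / ζ) • (∑ i ∈ S ω, ε i ω • φi i) - ∑ i, ε i ω • φi i
        = ∑ i, (c (S ω) i * ε i ω) • φi i := by
      funext j
      simp only [Pi.sub_apply, Pi.smul_apply, Finset.sum_apply, smul_eq_mul, hc]
      have : ∀ i : Fin n, ((1 / ζ) * (if i ∈ S ω then 1 else 0) - 1) * ε i ω * φi i j
          = (1 / ζ) * ((if i ∈ S ω then ε i ω * φi i j else 0)) - ε i ω * φi i j := by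
        intro i; by_cases h : i ∈ S ω <;> simp [h] <;> ring
      rw [Finset.sum_congr rfl fun i _ => this i, Finset.sum_sub_distrib, ← Finset.mul_sum,
        Finset.sum_ite_mem, Finset.univ_inter]
    rw [hv]
    have := aux_dot_mulvec_sum Λ⁻¹ φ (fun i => c (S ω) i * ε i ω) φi
    rw [this]
  -- weights
  set w : Finset (Fin n) → ℝ :=
    fun s => if s.card = m then ((n.choose m : ℝ))⁻¹ else 0 with hw
  have hchoose0 : (0:ℝ) < (n.choose m : ℝ) := by exact_mod_cast Nat.choose_pos hmn
  have hμS : ∀ s, (μ (S ⁻¹' {s})).toReal = w s := by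
    intro s
    rw [hS_law s, hw]
    by_cases h : s.card = m <;> simp [h]
  have hSmeasSet : ∀ s : Finset (Fin n), MeasurableSet (S ⁻¹' {s}) :=
    fun s => hS_meas (by exact MeasurableSpace.measurableSet_top)
  -- expectation of a function of S
  have hrep : ∀ g : Finset (Fin n) → ℝ, (fun ω => g (S ω))
      = fun ω => ∑ s : Finset (Fin n), Set.indicator (S ⁻¹' {s}) (fun _ => g s) ω := by
    intro g; funext ω
    rw [Finset.sum_congr rfl fun s _ => Set.indicator_apply _ _ _]
    simp only [Set.mem_preimage, Set.mem_singleton_iff]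
    exact (Fintype.sum_ite_eq (S ω) g).symm
  have hgS_int : ∀ g : Finset (Fin n) → ℝ, Integrable (fun ω => g (S ω)) μ := by
    intro g
    rw [hrep g]
    exact integrable_finset_sum _ fun s _ =>
      (integrable_const (g s)).indicator (hSmeasSet s)
  have hES : ∀ g : Finset (Fin n) → ℝ,
      ∫ ω, g (S ω) ∂μ = ∑ s : Finset (Fin n), w s * g s := by
    intro g
    rw [hrep g, integral_finset_sum _ fun s _ =>
      (integrable_const (g s)).indicator (hSmeasSet s)]
    exact Finset.sum_congr rfl fun s _ => by
      rw [integral_indicator_const _ (hSmeasSet s), smul_eq_mul, measureReal_def, hμS s]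
  -- basic sums
  have hsum_all : ∑ s : Finset (Fin n), w s = 1 := by
    rw [hw]
    rw [← Finset.sum_filter]
    simp only [Finset.sum_const, nsmul_eq_mul]
    rw [aux_card_all m]
    field_simp
  have hsum_mem : ∀ i : Fin n,
      ∑ s : Finset (Fin n), w s * (if i ∈ s then (1:ℝ) else 0) = ζ := by
    intro i
    have : ∀ s : Finset (Fin n), w s * (if i ∈ s then (1:ℝ) else 0)
        = if s.card = m ∧ i ∈ s then ((n.choose m : ℝ))⁻¹ else 0 := by
      intro s; rw [hw]
      by_cases h1 : s.card = m <;> by_cases h2 : i ∈ s <;> simp [h1, h2]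
    rw [Finset.sum_congr rfl fun s _ => this s, ← Finset.sum_filter]
    simp only [Finset.sum_const, nsmul_eq_mul]
    rw [aux_card_mem m hm i, hζ]
    -- ((n-1).choose (m-1)) / (n.choose m) = m / n
    have hnat : n * ((n-1).choose (m-1)) = n.choose m * m := by
      have := Nat.add_one_mul_choose_eq (n-1) (m-1)
      have h1 : n - 1 + 1 = n := by omega
      have h2 : m - 1 + 1 = m := by omega
      rw [h1, h2] at this
      exact this
    have hR : ((n:ℝ)) * ((n-1).choose (m-1) : ℝ) = (n.choose m : ℝ) * m := by
      exact_mod_cast congrArg (fun k : ℕ => (k:ℝ)) hnat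
    field_simp
    linarith [hR]
  -- moments of c
  have hEc2 : ∀ i : Fin n, ∑ s : Finset (Fin n), w s * (c s i * c s i) = (1 - ζ) / ζ := by
    intro i
    have hsplit : ∀ s : Finset (Fin n), w s * (c s i * c s i)
        = (1/ζ^2 - 2/ζ) * (w s * (if i ∈ s then (1:ℝ) else 0)) + w s := by
      intro s
      rw [hc]
      by_cases h : i ∈ s <;> simp only [h, if_true, if_false] <;> ring
    rw [Finset.sum_congr rfl fun s _ => hsplit s, Finset.sum_add_distrib, ← Finset.mul_sum,
      hsum_mem i, hsum_all]
    field_simp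
    ring
  -- independence helpers
  have hindep : ∀ (g : Finset (Fin n) → ℝ) (h : (Fin n → ℝ) → ℝ), Measurable h →
      IndepFun (fun ω => g (S ω)) (fun ω => h (fun i => ε i ω)) μ := by
    intro g h hh
    exact hS_indep.comp measurable_from_top hh
  have hε_int : ∀ i, Integrable (ε i) μ := fun i => (hε_L2 i).integrable (by norm_num)
  have hεε_int : ∀ i j : Fin n, Integrable (fun ω => ε i ω * ε j ω) μ := by
    intro i j
    have := (hε_L2 j).smul (hε_L2 i) (r := 1)
    rw [memLp_one_iff_integrable] at this
    exact this
  have hbd : ∀ g : Finset (Fin n) → ℝ, ∃ C, ∀ ω, ‖g (S ω)‖ ≤ C := by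
    intro g
    refine ⟨∑ s : Finset (Fin n), ‖g s‖, fun ω => ?_⟩
    exact Finset.single_le_sum (f := fun s => ‖g s‖) (fun s _ => norm_nonneg _)
      (Finset.mem_univ (S ω))
  -- product expectation : E[g(S) * h(ε-stuff)]
  have hprod : ∀ (g : Finset (Fin n) → ℝ) (h : (Fin n → ℝ) → ℝ), Measurable h →
      ∫ ω, g (S ω) * h (fun i => ε i ω) ∂μ
        = (∑ s : Finset (Fin n), w s * g s) * ∫ ω, h (fun i => ε i ω) ∂μ := by
    intro g h hh
    have hmeasε : Measurable fun ω => h (fun i => ε i ω) :=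
      hh.comp (measurable_pi_iff.mpr hε_meas)
    have := (hindep g h hh).integral_mul_eq_mul_integral (hgS_int g).aestronglyMeasurable
      hmeasε.aestronglyMeasurable
    rw [← hES g]
    exact this
  -- symmetry of Λ⁻¹
  have hΛsymm : Λᵀ = Λ := by
    rw [hΛ, Matrix.transpose_add, Matrix.transpose_smul, Matrix.transpose_one,
      Matrix.transpose_sum]
    congr 1
    refine Finset.sum_congr rfl fun i _ => ?_
    ext k l
    simp [Matrix.vecMulVec_apply, Matrix.transpose_apply, mul_comm]
  have hΛinv : Λ⁻¹ᵀ = Λ⁻¹ := by rw [Matrix.transpose_nonsing_inv, hΛsymm]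
  have hsym : ∀ x y : Fin d → ℝ, x ⬝ᵥ (Λ⁻¹ *ᵥ y) = y ⬝ᵥ (Λ⁻¹ *ᵥ x) := by
    intro x y
    rw [Matrix.dotProduct_mulVec, ← hΛinv, Matrix.vecMul_transpose, dotProduct_comm, hΛinv]
  -- integrability of the terms
  have hcS_meas : ∀ g : Finset (Fin n) → ℝ, Measurable (fun ω => g (S ω)) :=
    fun g => measurable_from_top.comp hS_meas
  have hterm_int : ∀ i : Fin n, Integrable (fun ω => c (S ω) i * ε i ω * a i) μ := by
    intro i
    exact (((hε_int i).bdd_mul (hcS_meas (fun s => c s i)).aestronglyMeasurable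
      (Filter.Eventually.of_forall (hbd (fun s => c s i)).choose_spec)).mul_const (a i))
  have hterm2_int : ∀ i j : Fin n,
      Integrable (fun ω => (c (S ω) i * c (S ω) j) * (ε i ω * ε j ω) * (a i * a j)) μ := by
    intro i j
    exact (((hεε_int i j).bdd_mul
      (hcS_meas (fun s => c s i * c s j)).aestronglyMeasurable
      (Filter.Eventually.of_forall (hbd (fun s => c s i * c s j)).choose_spec)).mul_const (a i * a j))
  -- mean of each term
  have hmean_term : ∀ i : Fin n, ∫ ω, c (S ω) i * ε i ω * a i ∂μ = 0 := by
    intro i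
    rw [integral_mul_const]
    have h1 := hprod (fun s => c s i) (fun v => v i) (measurable_pi_apply i)
    simp only at h1
    rw [h1, hε_mean i, mul_zero, zero_mul]
  have hmean : ∫ ω, D ω ∂μ = 0 := by
    simp only [hD']
    rw [integral_finset_sum _ fun i _ => hterm_int i]
    exact Finset.sum_eq_zero fun i _ => hmean_term i
  refine ⟨hmean, ?_⟩
  -- second moments of noise products
  have hεε0 : ∀ i j : Fin n, i ≠ j → ∫ ω, ε i ω * ε j ω ∂μ = 0 := by
    intro i j hij
    have h := (hε_indep.indepFun hij).integral_mul_eq_mul_integral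
      (hε_L2 i).aestronglyMeasurable (hε_L2 j).aestronglyMeasurable
    rw [show (fun ω => ε i ω * ε j ω) = ε i * ε j from rfl]
    rw [h, hε_mean i, zero_mul]
  -- generic product integral
  have hint_ij : ∀ i j : Fin n,
      ∫ ω, (c (S ω) i * c (S ω) j) * (ε i ω * ε j ω) * (a i * a j) ∂μ
        = (∑ s : Finset (Fin n), w s * (c s i * c s j))
            * (∫ ω, ε i ω * ε j ω ∂μ) * (a i * a j) := by
    intro i j
    rw [integral_mul_const]
    have h1 := hprod (fun s => c s i * c s j) (fun v => v i * v j)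
      ((measurable_pi_apply i).mul (measurable_pi_apply j))
    simp only at h1
    rw [h1]
  -- expand the square
  have hsq : ∀ ω, (D ω) ^ 2
      = ∑ i, ∑ j, (c (S ω) i * c (S ω) j) * (ε i ω * ε j ω) * (a i * a j) := by
    intro ω
    rw [hD' ω, sq, Finset.sum_mul_sum]
    exact Finset.sum_congr rfl fun i _ => Finset.sum_congr rfl fun j _ => by ring
  have hvar : ∫ ω, (D ω) ^ 2 ∂μ
      = ∑ i : Fin n, ((1 - ζ) / ζ * σ ^ 2 * (a i * a i)) := by
    simp only [hsq]
    rw [integral_finset_sum _ fun i _ => integrable_finset_sum _ fun j _ => hterm2_int i j]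
    refine Finset.sum_congr rfl fun i _ => ?_
    rw [integral_finset_sum _ fun j _ => hterm2_int i j]
    rw [Finset.sum_eq_single i]
    · rw [hint_ij i i]
      rw [show (∫ ω, ε i ω * ε i ω ∂μ) = σ ^ 2 by
        rw [← hε_var i]; exact integral_congr_ae (Filter.Eventually.of_forall fun ω => by ring)]
      rw [hEc2 i]
    · intro j _ hji
      rw [hint_ij i j, hεε0 i j (Ne.symm hji), mul_zero, zero_mul]
    · intro h; exact absurd (Finset.mem_univ i) h
  -- right-hand side
  have hRHS : φ ⬝ᵥ (Λ⁻¹ *ᵥ ((∑ i, vecMulVec (φi i) (φi i)) *ᵥ (Λ⁻¹ *ᵥ φ)))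
      = ∑ i, a i * a i := by
    set v := Λ⁻¹ *ᵥ φ with hv
    have h1 : (∑ i, vecMulVec (φi i) (φi i)) *ᵥ v
        = ∑ i, (φi i ⬝ᵥ v) • φi i := by
      funext k
      simp only [Matrix.mulVec, dotProduct, Finset.sum_apply, Matrix.sum_apply,
        Matrix.vecMulVec_apply, Pi.smul_apply, smul_eq_mul, Finset.sum_mul]
      rw [Finset.sum_comm]
      exact Finset.sum_congr rfl fun i _ => Finset.sum_congr rfl fun j _ => by ring
    rw [h1, aux_dot_mulvec_sum]
    exact Finset.sum_congr rfl fun i _ => by rw [hsym (φi i) φ]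
  rw [hvar, hRHS, ← Finset.mul_sum]
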